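/- For positive invertible operators A, B and ν ∈ [0,1] with r = min{ν, 1−ν}, { A⁻¹♯_ν B⁻¹ + 2r((A⁻¹+B⁻¹)/2 − A⁻¹♯_{1/2}B⁻¹) }⁻¹ ≥ { (1−ν)A⁻¹ + νB⁻¹ }⁻¹ in the Loewner order, refining the geometric-harmonic mean inequality. -/

import Mathlib

set_option maxHeartbeats 4000000
set_option synthInstance.maxHeartbeats 1000000

open NNReal

variable {H : Type*} [NormedAddCommGroup H] [InnerProductSpace ℂ H] [CompleteSpace H]

private lemma scalar_half {x : ℝ} (hx : 0 ≤ x) : x ^ (1/2:ℝ) ≤ 1/2 + (1/2) * x := by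
  rw [← Real.sqrt_eq_rpow]
  nlinarith [Real.sq_sqrt hx, Real.sqrt_nonneg x, sq_nonneg (Real.sqrt x - 1)]

private lemma scalar_key {x ν : ℝ} (hx : 0 ≤ x) (hν0 : 0 ≤ ν) (hν1 : ν ≤ 1) :
    x ^ ν + (2 * min ν (1-ν)) * ((1/2) * (1 + x) - x ^ (1/2:ℝ)) ≤ (1 - ν) + ν * x := by
  rcases le_total ν (1-ν) with h | h
  · rw [min_eq_left h]
    have key : x ^ ν ≤ (1 - 2*ν) * 1 + (2*ν) * x ^ (1/2:ℝ) := by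
      calc x ^ ν = 1 ^ (1-2*ν : ℝ) * (x ^ (1/2:ℝ)) ^ (2*ν : ℝ) := by
            rw [Real.one_rpow, one_mul, ← Real.rpow_mul hx]
            congr 1; ring
        _ ≤ _ := Real.geom_mean_le_arith_mean2_weighted (by linarith) (by linarith)
            zero_le_one (Real.rpow_nonneg hx _) (by ring)
    nlinarith
  · rw [min_eq_right h]
    have hν2 : (1:ℝ)/2 ≤ ν := by linarith
    have key : x ^ ν ≤ (2*ν-1) * x + (2-2*ν) * x ^ (1/2:ℝ) := by
      calc x ^ ν = x ^ (2*ν-1 : ℝ) * (x ^ (1/2:ℝ)) ^ (2-2*ν : ℝ) := by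
            rw [← Real.rpow_mul hx, ← Real.rpow_add' hx (by intro h0; linarith)]
            congr 1; ring
        _ ≤ _ := Real.geom_mean_le_arith_mean2_weighted (by linarith) (by linarith)
            hx (Real.rpow_nonneg hx _) (by ring)
    nlinarith

private lemma cfc_rpow_eq (C : H →L[ℂ] H) (hC : 0 ≤ C) (μ : ℝ) :
    C ^ μ = cfc (fun x : ℝ => x ^ μ) C := by
  rw [CFC.rpow_def, cfc_nnreal_eq_real _ _ hC]
  refine cfc_congr fun x hx => ?_
  have hx0 : 0 ≤ x := spectrum_nonneg_of_nonneg hC hx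
  simp [NNReal.coe_rpow, Real.coe_toNNReal x hx0]

private lemma op_decomp (C : H →L[ℂ] H) (hC : 0 ≤ C) (ν t : ℝ) (hν : 0 ≤ ν) :
    cfc (fun x : ℝ => x ^ ν + t * ((1/2) * (1 + x) - x ^ (1/2:ℝ))) C
      = C ^ ν + t • ((1/2:ℝ) • (1 + C) - C ^ (1/2:ℝ)) := by
  have hsa : IsSelfAdjoint C := .of_nonneg hC
  have c1 : ContinuousOn (fun x : ℝ => x ^ ν) (spectrum ℝ C) :=
    (Real.continuous_rpow_const hν).continuousOn
  have c2 : ContinuousOn (fun x : ℝ => x ^ (1/2:ℝ)) (spectrum ℝ C) :=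
    (Real.continuous_rpow_const (by norm_num)).continuousOn
  rw [cfc_rpow_eq C hC ν, cfc_rpow_eq C hC (1/2)]
  rw [cfc_add _ _ _ c1 (by fun_prop)]
  congr 1
  rw [cfc_const_mul _ _ _ (by fun_prop)]
  congr 1
  rw [cfc_sub _ _ _ (by fun_prop) c2]
  congr 1
  rw [cfc_const_mul _ _ _ (by fun_prop)]
  congr 1
  rw [cfc_add _ _ _ (by fun_prop) (by fun_prop), cfc_const_one ℝ C, cfc_id' ℝ C]

private lemma op_const_lin (C : H →L[ℂ] H) (hC : 0 ≤ C) (a b : ℝ) :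
    cfc (fun x : ℝ => a + b * x) C = a • (1 : H →L[ℂ] H) + b • C := by
  have hsa : IsSelfAdjoint C := .of_nonneg hC
  rw [cfc_add _ _ _ (by fun_prop) (by fun_prop), cfc_const a C,
    cfc_const_mul _ _ _ (by fun_prop), cfc_id' ℝ C, Algebra.algebraMap_eq_smul_one]

private lemma op_amgm (C : H →L[ℂ] H) (hC : 0 ≤ C) :
    C ^ (1/2:ℝ) ≤ (1/2:ℝ) • (1 + C) := by
  have hsa : IsSelfAdjoint C := .of_nonneg hC
  have c2 : ContinuousOn (fun x : ℝ => x ^ (1/2:ℝ)) (spectrum ℝ C) :=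
    (Real.continuous_rpow_const (by norm_num)).continuousOn
  have e : (1/2:ℝ) • ((1:H →L[ℂ] H) + C) = cfc (fun x : ℝ => (1/2) + (1/2) * x) C := by
    rw [op_const_lin C hC, smul_add]
  rw [cfc_rpow_eq C hC, e]
  exact cfc_mono (fun x hx => scalar_half (spectrum_nonneg_of_nonneg hC hx)) c2 (by fun_prop)

private lemma op_key (C : H →L[ℂ] H) (hC : 0 ≤ C) (ν : ℝ) (hν0 : 0 ≤ ν) (hν1 : ν ≤ 1) :
    C ^ ν + (2 * min ν (1-ν)) • ((1/2:ℝ) • (1 + C) - C ^ (1/2:ℝ))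
      ≤ (1-ν) • (1 : H →L[ℂ] H) + ν • C := by
  have crh : Continuous (fun x : ℝ => x ^ (1/2:ℝ)) := Real.continuous_rpow_const (by norm_num)
  have c1 : ContinuousOn (fun x : ℝ => x ^ ν + (2 * min ν (1-ν)) * ((1/2) * (1 + x) - x ^ (1/2:ℝ)))
      (spectrum ℝ C) :=
    ((Real.continuous_rpow_const hν0).add (continuous_const.mul
      (((continuous_const.mul (continuous_const.add continuous_id)).sub crh)))).continuousOn
  rw [← op_decomp C hC ν _ hν0, ← op_const_lin C hC (1-ν) ν]
  exact cfc_mono (fun x hx => scalar_key (spectrum_nonneg_of_nonneg hC hx) hν0 hν1) c1 (by fun_prop)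

/-- The weighted operator geometric mean `A ♯_ν B = A^{1/2} (A^{-1/2} B A^{-1/2})^ν A^{1/2}`. -/
noncomputable def geomMean (A B : H →L[ℂ] H) (ν : ℝ) : H →L[ℂ] H :=
  A ^ ((1:ℝ)/2) * (A ^ (-(1:ℝ)/2) * B * A ^ (-(1:ℝ)/2)) ^ ν * A ^ ((1:ℝ)/2)

theorem refined_harmonic_ge_harmonic (A B : H →L[ℂ] H) (hA : 0 ≤ A) (hB : 0 ≤ B)
    (hAu : IsUnit A) (hBu : IsUnit B) (ν : ℝ) (hν : ν ∈ Set.Icc (0:ℝ) 1)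
    (r : ℝ) (hr : r = min ν (1 - ν)) :
    Ring.inverse ((1 - ν) • Ring.inverse A + ν • Ring.inverse B) ≤
      Ring.inverse (geomMean (Ring.inverse A) (Ring.inverse B) ν +
        (2 * r) • ((1/2 : ℝ) • (Ring.inverse A + Ring.inverse B) -
          geomMean (Ring.inverse A) (Ring.inverse B) (1/2))) := by
  obtain ⟨hν0, hν1⟩ := hν
  subst hr
  lift A to (H →L[ℂ] H)ˣ using hAu
  lift B to (H →L[ℂ] H)ˣ using hBu
  rw [Ring.inverse_unit, Ring.inverse_unit]
  set A' : H →L[ℂ] H := ↑A⁻¹ with hA'def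
  set B' : H →L[ℂ] H := ↑B⁻¹ with hB'def
  have hA'pos : 0 ≤ A' := CFC.inv_nonneg_of_nonneg A hA
  have hB'pos : 0 ≤ B' := CFC.inv_nonneg_of_nonneg B hB
  have hA'u : IsUnit A' := A⁻¹.isUnit
  have hB'u : IsUnit B' := B⁻¹.isUnit
  set S : H →L[ℂ] H := A' ^ ((1:ℝ)/2) with hS
  set T : H →L[ℂ] H := A' ^ (-(1:ℝ)/2) with hT
  have hSpos : (0:H →L[ℂ] H) ≤ S := CFC.rpow_nonneg
  have h0A' : 0 ∉ spectrum ℝ≥0 A' := spectrum.zero_notMem ℝ≥0 hA'u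
  have hTS : T * S = 1 := by
    rw [hS, hT, neg_div]; exact CFC.rpow_neg_mul_rpow _ (hA'u.isStrictlyPositive hA'pos)
  have hST : S * T = 1 := by
    rw [hS, hT, neg_div]; exact CFC.rpow_mul_rpow_neg _ (hA'u.isStrictlyPositive hA'pos)
  have hSS : S * S = A' := by
    rw [hS, ← CFC.rpow_add hA'u, show (1:ℝ)/2 + (1:ℝ)/2 = 1 by norm_num,
      CFC.rpow_one A' hA'pos]
  set C : H →L[ℂ] H := T * B' * T with hCdef
  have hCpos : 0 ≤ C := conjugate_nonneg_of_nonneg hB'pos CFC.rpow_nonneg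
  have hTu : IsUnit T := ⟨⟨T, S, hTS, hST⟩, rfl⟩
  have hSu : IsUnit S := ⟨⟨S, T, hST, hTS⟩, rfl⟩
  have hCu : IsUnit C := (hTu.mul hB'u).mul hTu
  have hBC : S * C * S = B' := by
    rw [hCdef]
    have e : S * (T * B' * T) * S = (S * T) * (B' * (T * S)) := by
      simp only [mul_assoc]
    rw [e, hST, hTS, one_mul, mul_one]
  have hgm : ∀ μ : ℝ, geomMean A' B' μ = S * C ^ μ * S := fun μ => by
    rw [geomMean, hCdef, hT, hS]
  have hkey := op_key C hCpos ν hν0 hν1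
  have hconj := conjugate_le_conjugate_of_nonneg hkey hSpos
  set X : H →L[ℂ] H := C ^ ν + (2 * min ν (1-ν)) • ((1/2:ℝ) • (1 + C) - C ^ (1/2:ℝ)) with hX
  have hL : S * X * S
      = geomMean A' B' ν + (2 * min ν (1-ν)) • ((1/2:ℝ) • (A' + B') - geomMean A' B' (1/2)) := by
    rw [hgm ν, hgm (1/2), hX]
    simp only [mul_add, add_mul, mul_sub, sub_mul, mul_smul_comm, smul_mul_assoc, mul_one]
    rw [hSS, hBC]
  have hR : S * ((1-ν) • (1:H →L[ℂ] H) + ν • C) * S = (1-ν) • A' + ν • B' := by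
    simp only [mul_add, add_mul, mul_smul_comm, smul_mul_assoc, mul_one]
    rw [hSS, hBC]
  rw [hL, hR] at hconj
  have hCνu : IsUnit (C ^ ν) :=
    ⟨⟨C ^ ν, C ^ (-ν), CFC.rpow_mul_rpow_neg ν (hCu.isStrictlyPositive hCpos),
      CFC.rpow_neg_mul_rpow ν (hCu.isStrictlyPositive hCpos)⟩, rfl⟩
  have hfrac : (0:H →L[ℂ] H) ≤ (1/2:ℝ) • (1 + C) - C ^ (1/2:ℝ) :=
    sub_nonneg.mpr (op_amgm C hCpos)
  have hr0 : 0 ≤ 2 * min ν (1-ν) := by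
    have : 0 ≤ min ν (1-ν) := le_min hν0 (by linarith)
    linarith
  have hXge : C ^ ν ≤ X := le_add_of_nonneg_right (smul_nonneg hr0 hfrac)
  have hXu : IsUnit X := CStarAlgebra.isUnit_of_le (C ^ ν) hXge (hCνu.isStrictlyPositive CFC.rpow_nonneg)
  have hXpos : (0:H →L[ℂ] H) ≤ X := le_trans CFC.rpow_nonneg hXge
  have hLu : IsUnit (geomMean A' B' ν +
      (2 * min ν (1-ν)) • ((1/2:ℝ) • (A' + B') - geomMean A' B' (1/2))) := by
    rw [← hL]; exact (hSu.mul hXu).mul hSu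
  have hLpos : (0:H →L[ℂ] H) ≤ geomMean A' B' ν +
      (2 * min ν (1-ν)) • ((1/2:ℝ) • (A' + B') - geomMean A' B' (1/2)) := by
    rw [← hL]; exact conjugate_nonneg_of_nonneg hXpos hSpos
  have hRu : IsUnit ((1-ν) • A' + ν • B') := CStarAlgebra.isUnit_of_le _ hconj (hLu.isStrictlyPositive hLpos)
  obtain ⟨x, hx⟩ := hLu
  obtain ⟨y, hy⟩ := hRu
  rw [← hx, ← hy, Ring.inverse_unit, Ring.inverse_unit]
  exact CStarAlgebra.inv_le_inv (hx ▸ hLpos) (by rw [hx, hy]; exact hconj)
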